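/- Let θ(x) = ∑_{p ≤ x, p prime} ln p denote the first Chebyshev function. Then ∑_{p ≤ x, p prime} ln p / θ(p) = ln x + O(1), i.e. there exists a constant C > 0 such that for all real x ≥ 2, |∑_{p ≤ x, p prime} ln p / θ(p) − ln x| ≤ C. -/

import Mathlib

open Filter Finset


theorem aux_centralBinom_le (n : ℕ) (n_pos : 0 < n) :
    Nat.centralBinom n ≤ (2 * n) ^ Nat.sqrt (2 * n) * primorial (2 * n) := by
  have n2_pos : 1 ≤ 2 * n := by omega
  let S := (Finset.range (2 * n + 1)).filter Nat.Prime
  let f := fun (x : ℕ) => x ^ (Nat.centralBinom n).factorization x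
  have hprod : ∏ x ∈ S, f x = ∏ x ∈ Finset.range (2 * n + 1), f x := by
    refine Finset.prod_filter_of_ne fun p _ h => ?_
    contrapose! h
    dsimp only [f]
    rw [Nat.factorization_eq_zero_of_not_prime _ h, pow_zero]
  rw [← Nat.prod_pow_factorization_centralBinom n, ← hprod,
    ← Finset.prod_filter_mul_prod_filter_not S (· ≤ Nat.sqrt (2 * n))]
  apply Nat.mul_le_mul
  · refine (Finset.prod_le_prod' fun p _ => (?_ : f p ≤ 2 * n)).trans ?_
    · exact Nat.pow_factorization_choose_le (by omega)
    have : (Finset.Icc 1 (Nat.sqrt (2 * n))).card = Nat.sqrt (2 * n) := by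
      rw [Nat.card_Icc, Nat.add_sub_cancel]
    rw [Finset.prod_const]
    refine pow_right_mono₀ n2_pos ((Finset.card_le_card fun x hx => ?_).trans this.le)
    obtain ⟨h1, h2⟩ := Finset.mem_filter.1 hx
    exact Finset.mem_Icc.mpr ⟨(Finset.mem_filter.1 h1).2.one_lt.le, h2⟩
  · refine (Finset.prod_le_prod' fun p hp => (?_ : f p ≤ p)).trans ?_
    · obtain ⟨h1, h2⟩ := Finset.mem_filter.1 hp
      refine (pow_right_mono₀ (Finset.mem_filter.1 h1).2.one_lt.le ?_).trans (pow_one p).le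
      exact Nat.factorization_choose_le_one (Nat.sqrt_lt'.mp <| not_le.1 h2)
    refine Finset.prod_le_prod_of_subset_of_one_le' (Finset.filter_subset _ _) ?_
    exact fun p hp _ => (Finset.mem_filter.1 hp).2.one_lt.le

theorem aux_primorial_lower (n : ℕ) (h : 512 ≤ n) : 4 ^ (2 * n / 3) ≤ primorial (2 * n) := by
  have H1 : n * (2 * n) ^ Nat.sqrt (2 * n) * 4 ^ (2 * n / 3) ≤ 4 ^ n :=
    bertrand_main_inequality h
  have H2 : 4 ^ n < n * Nat.centralBinom n :=
    Nat.four_pow_lt_mul_centralBinom n (by omega)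
  have H3 := aux_centralBinom_le n (by omega)
  have key : n * ((2 * n) ^ Nat.sqrt (2 * n) * 4 ^ (2 * n / 3)) <
      n * ((2 * n) ^ Nat.sqrt (2 * n) * primorial (2 * n)) := by
    calc n * ((2 * n) ^ Nat.sqrt (2 * n) * 4 ^ (2 * n / 3))
        = n * (2 * n) ^ Nat.sqrt (2 * n) * 4 ^ (2 * n / 3) := by ring
      _ ≤ 4 ^ n := H1
      _ < n * Nat.centralBinom n := H2
      _ ≤ n * ((2 * n) ^ Nat.sqrt (2 * n) * primorial (2 * n)) :=
          Nat.mul_le_mul_left n H3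
  have h2 := Nat.lt_of_mul_lt_mul_left key
  exact (Nat.lt_of_mul_lt_mul_left h2).le

theorem aux_primorial_mono : Monotone primorial := by
  intro a b hab
  refine Finset.prod_le_prod_of_subset_of_one_le' ?_ ?_
  · exact Finset.filter_subset_filter _ (Finset.range_subset_range.2 (by omega))
  · exact fun p hp _ => (Finset.mem_filter.1 hp).2.one_lt.le
open Finset

noncomputable def gch : ℕ → ℝ := fun n => Real.log (primorial n)

theorem gch_mono : Monotone gch := fun a b hab =>
  Real.log_le_log (by exact_mod_cast primorial_pos a) (by exact_mod_cast aux_primorial_mono hab)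

theorem gch_two : gch 2 = Real.log 2 := by rw [gch, primorial_two]; norm_num

theorem gch_ge_log2 {n : ℕ} (hn : 2 ≤ n) : Real.log 2 ≤ gch n := by
  rw [← gch_two]; exact gch_mono hn

theorem gch_pos {n : ℕ} (hn : 2 ≤ n) : 0 < gch n :=
  lt_of_lt_of_le (Real.log_pos (by norm_num)) (gch_ge_log2 hn)

theorem gch_le (n : ℕ) : gch n ≤ n * Real.log 4 := by
  have h : (primorial n : ℝ) ≤ (4:ℝ) ^ n := by exact_mod_cast primorial_le_4_pow n
  calc gch n ≤ Real.log ((4:ℝ) ^ n) :=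
        Real.log_le_log (by exact_mod_cast primorial_pos n) h
    _ = n * Real.log 4 := by rw [Real.log_pow]

theorem gch_lower {m : ℕ} (hm : 1024 ≤ m) : (m : ℝ) / 8 * Real.log 2 ≤ gch m := by
  set n := m / 2 with hn
  have hn512 : 512 ≤ n := by omega
  have h1 : (4:ℕ) ^ (2 * n / 3) ≤ primorial (2 * n) := aux_primorial_lower n hn512
  have h2 : primorial (2 * n) ≤ primorial m := aux_primorial_mono (by omega)
  have h3 : ((4:ℕ):ℝ) ^ (2 * n / 3) ≤ (primorial m : ℝ) := by exact_mod_cast h1.trans h2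
  have h4 : gch m ≥ (2 * n / 3 : ℕ) * Real.log 4 := by
    rw [gch, ← Real.log_pow]
    exact Real.log_le_log (by positivity) (by exact_mod_cast h3)
  have h5 : ((2 * n / 3 : ℕ) : ℝ) ≥ (2 * (n:ℝ) - 2) / 3 := by
    have : 2 * n ≤ 3 * (2 * n / 3) + 2 := by omega
    have := (Nat.cast_le (α := ℝ)).2 this
    push_cast at this ⊢
    linarith
  have h6 : ((n:ℝ)) ≥ ((m:ℝ) - 1) / 2 := by
    have : m ≤ 2 * n + 1 := by omega
    have := (Nat.cast_le (α := ℝ)).2 this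
    push_cast at this ⊢
    linarith
  have hlog4 : Real.log 4 = 2 * Real.log 2 := by
    rw [show (4:ℝ) = 2^2 by norm_num, Real.log_pow]; push_cast; ring
  have hm' : (1024:ℝ) ≤ (m:ℝ) := by exact_mod_cast hm
  have hl2 : (0:ℝ) < Real.log 2 := Real.log_pos (by norm_num)
  calc (m : ℝ) / 8 * Real.log 2 ≤ (2 * (n:ℝ) - 2) / 3 * Real.log 4 := by
        rw [hlog4]; nlinarith
    _ ≤ ((2 * n / 3 : ℕ) : ℝ) * Real.log 4 := by
        have : (0:ℝ) < Real.log 4 := by rw [hlog4]; linarith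
        nlinarith
    _ ≤ gch m := h4

theorem Iic_eq_range (n : ℕ) : Finset.Iic n = Finset.range (n + 1) := by
  ext a; simp [Nat.lt_succ_iff]

theorem theta_eq (N : ℕ) :
    ∑ q ∈ (Finset.Iic N).filter Nat.Prime, Real.log q = gch N := by
  rw [Iic_eq_range, gch, primorial]
  push_cast
  rw [Real.log_prod]
  exact fun p hp => by
    exact_mod_cast (Finset.mem_filter.1 hp).2.pos.ne'

theorem primorial_succ_not_prime {n : ℕ} (h : ¬ (n+1).Prime) :
    primorial (n + 1) = primorial n := by
  rw [primorial, primorial, Finset.range_add_one, Finset.filter_insert, if_neg h]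

theorem gch_succ_prime {n : ℕ} (h : (n+1).Prime) :
    gch (n + 1) = gch n + Real.log (n + 1) := by
  have : primorial (n + 1) = (n + 1) * primorial n := by
    rw [primorial, primorial, Finset.range_add_one, Finset.filter_insert, if_pos h,
      Finset.prod_insert (by simp)]
  rw [gch, this, gch]
  push_cast
  rw [Real.log_mul (by positivity) (by exact_mod_cast (primorial_pos n).ne')]
  ring
noncomputable def tch (n : ℕ) : ℝ := if n.Prime then Real.log n / gch n else 0
noncomputable def ech (n : ℕ) : ℝ := if n.Prime then (Real.log n)^2 / (gch (n-1))^2 else 0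

theorem ech_nonneg (n : ℕ) : 0 ≤ ech n := by
  unfold ech; split_ifs with h
  · positivity
  · exact le_rfl

theorem t_upper {n : ℕ} (hn : 3 ≤ n) :
    tch n ≤ Real.log (gch n) - Real.log (gch (n-1)) := by
  obtain ⟨m, rfl⟩ : ∃ m, n = m + 1 := ⟨n-1, by omega⟩
  have hm2 : 2 ≤ m := by omega
  simp only [Nat.add_sub_cancel]
  by_cases hp : (m+1).Prime
  · have hg : gch (m + 1) = gch m + Real.log ((m:ℝ) + 1) := by
      have := gch_succ_prime hp; push_cast at this ⊢; exact this
    have hA0 : 0 < gch m := gch_pos hm2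
    set A := gch m
    set a := Real.log ((m:ℝ) + 1) with ha_def
    have ha : 0 < a := Real.log_pos (by push_cast; exact_mod_cast by omega)
    have hAa : 0 < A + a := by linarith
    have key := Real.log_le_sub_one_of_pos (show (0:ℝ) < A / (A + a) by positivity)
    rw [Real.log_div hA0.ne' hAa.ne'] at key
    have h2 : A / (A + a) - 1 = -(a / (A + a)) := by field_simp; ring
    rw [h2] at key
    simp only [tch, if_pos hp, hg]
    push_cast
    linarith
  · have hg : gch (m + 1) = gch m := by
      rw [gch, primorial_succ_not_prime hp, gch]
    simp [tch, hp, hg]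

theorem t_lower {n : ℕ} (hn : 3 ≤ n) :
    Real.log (gch n) - Real.log (gch (n-1)) - ech n ≤ tch n := by
  obtain ⟨m, rfl⟩ : ∃ m, n = m + 1 := ⟨n-1, by omega⟩
  have hm2 : 2 ≤ m := by omega
  simp only [Nat.add_sub_cancel]
  by_cases hp : (m+1).Prime
  · have hg : gch (m + 1) = gch m + Real.log ((m:ℝ) + 1) := by
      have := gch_succ_prime hp; push_cast at this ⊢; exact this
    have hA0 : 0 < gch m := gch_pos hm2
    set A := gch m
    set a := Real.log ((m:ℝ) + 1) with ha_def
    have ha : 0 < a := Real.log_pos (by push_cast; exact_mod_cast by omega)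
    have hAa : 0 < A + a := by linarith
    have key := Real.log_le_sub_one_of_pos (show (0:ℝ) < (A + a) / A by positivity)
    rw [Real.log_div hAa.ne' hA0.ne'] at key
    have h1 : Real.log (A + a) - Real.log A ≤ a / A := by
      have : (A + a) / A - 1 = a / A := by field_simp; ring
      linarith [this ▸ key]
    have h2 : a / A - a / (A + a) = a^2 / (A * (A + a)) := by
      field_simp; ring
    have h3 : a^2 / (A * (A + a)) ≤ a^2 / A^2 := by
      apply div_le_div_of_nonneg_left (by positivity) (by positivity)
      nlinarith
    simp only [tch, ech, if_pos hp, hg]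
    push_cast
    linarith
  · have hg : gch (m + 1) = gch m := by
      rw [gch, primorial_succ_not_prime hp, gch]
    simp [tch, ech, hp, hg]

theorem sum_L_eq (N : ℕ) (hN : 2 ≤ N) :
    ∑ n ∈ Finset.Icc 3 N, (Real.log (gch n) - Real.log (gch (n-1)))
      = Real.log (gch N) - Real.log (gch 2) := by
  induction N, hN using Nat.le_induction with
  | base => simp
  | succ N hN ih =>
    rw [Finset.sum_Icc_succ_top (by omega), ih]
    simp only [Nat.add_sub_cancel]
    ring

theorem ech_le_small {n : ℕ} (h3 : 3 ≤ n) (h : n ≤ 1030) :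
    ech n ≤ (Real.log 1030)^2 / (Real.log 2)^2 := by
  have hl2 : (0:ℝ) < Real.log 2 := Real.log_pos (by norm_num)
  unfold ech; split_ifs with hp
  · have hgl : Real.log 2 ≤ gch (n-1) := gch_ge_log2 (by omega)
    apply div_le_div₀ (by positivity) ?_ (by positivity) ?_
    · have h1 : (0:ℝ) ≤ Real.log n := Real.log_nonneg (by exact_mod_cast by omega)
      have h2 : Real.log n ≤ Real.log 1030 :=
        Real.log_le_log (by exact_mod_cast by omega) (by exact_mod_cast h)
      nlinarith
    · nlinarith
  · positivity

theorem ech_le_large {n : ℕ} (h : 1031 ≤ n) :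
    ech n ≤ 4096 / (Real.log 2)^2 * (1 / (n:ℝ)^((3:ℝ)/2)) := by
  have hl2 : (0:ℝ) < Real.log 2 := Real.log_pos (by norm_num)
  have hn0 : (0:ℝ) < (n:ℝ) := by exact_mod_cast by omega
  unfold ech; split_ifs with hp
  · -- numerator bound : (log n)^2 ≤ 16 * n^(1/2)
    have hln : Real.log n ≤ 4 * (n:ℝ)^((1:ℝ)/4) := by
      have h1 : Real.log ((n:ℝ)^((1:ℝ)/4)) = (1/4 : ℝ) * Real.log n := Real.log_rpow hn0 _
      have h2 := Real.log_le_sub_one_of_pos (Real.rpow_pos_of_pos hn0 ((1:ℝ)/4))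
      nlinarith [Real.rpow_pos_of_pos hn0 ((1:ℝ)/4)]
    have hlnn : (0:ℝ) ≤ Real.log n := Real.log_nonneg (by exact_mod_cast by omega)
    have hq : ((n:ℝ)^((1:ℝ)/4))^2 = (n:ℝ)^((1:ℝ)/2) := by
      rw [← Real.rpow_natCast ((n:ℝ)^((1:ℝ)/4)) 2, ← Real.rpow_mul hn0.le]
      norm_num
    have hnum : (Real.log n)^2 ≤ 16 * (n:ℝ)^((1:ℝ)/2) := by
      nlinarith [Real.rpow_pos_of_pos hn0 ((1:ℝ)/4)]
    -- denominator bound : gch (n-1) ≥ (n/16) * log 2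
    have hden : (n:ℝ)/16 * Real.log 2 ≤ gch (n-1) := by
      have h1 : ((n-1 : ℕ):ℝ)/8 * Real.log 2 ≤ gch (n-1) := gch_lower (by omega)
      have h2 : (n:ℝ)/2 ≤ ((n-1 : ℕ):ℝ) := by
        have : (n:ℝ) - 1 = ((n-1:ℕ):ℝ) := by
          have : (1:ℕ) ≤ n := by omega
          push_cast [this]; ring
        rw [← this]
        have h2n : (2:ℝ) ≤ (n:ℝ) := by exact_mod_cast (by omega : 2 ≤ n)
        linarith
      nlinarith
    have hdpos : (0:ℝ) < (n:ℝ)/16 * Real.log 2 := by positivity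
    have step1 : (Real.log n)^2 / (gch (n-1))^2
        ≤ (16 * (n:ℝ)^((1:ℝ)/2)) / ((n:ℝ)/16 * Real.log 2)^2 := by
      apply div_le_div₀ (by positivity) hnum (by positivity) ?_
      nlinarith
    refine step1.trans ?_
    -- now an exact computation
    have hhalf : (0:ℝ) < (n:ℝ)^((1:ℝ)/2) := Real.rpow_pos_of_pos hn0 _
    have h32 : (0:ℝ) < (n:ℝ)^((3:ℝ)/2) := Real.rpow_pos_of_pos hn0 _
    have hmul : (n:ℝ)^((1:ℝ)/2) * (n:ℝ)^((3:ℝ)/2) = (n:ℝ)^2 := by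
      rw [← Real.rpow_natCast (n:ℝ) 2, ← Real.rpow_add hn0]
      norm_num
    have heq : 16 * (n:ℝ)^((1:ℝ)/2) / ((n:ℝ)/16 * Real.log 2)^2
        = 4096 / (Real.log 2)^2 * (1 / (n:ℝ)^((3:ℝ)/2)) := by
      field_simp
      nlinarith [sq_nonneg ((n:ℝ)), hmul, hl2, hhalf, h32, sq_nonneg (Real.log 2)]
    rw [heq]
  · positivity

noncomputable def Ebound : ℝ :=
  1028 * ((Real.log 1030)^2 / (Real.log 2)^2)
    + 4096 / (Real.log 2)^2 * ∑' (n:ℕ), 1 / (n:ℝ)^((3:ℝ)/2)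

theorem summable_32 : Summable (fun n : ℕ => 1 / (n:ℝ)^((3:ℝ)/2)) :=
  Real.summable_one_div_nat_rpow.2 (by norm_num)

theorem err_sum_le (N : ℕ) : ∑ n ∈ Finset.Icc 3 N, ech n ≤ Ebound := by
  have hl2 : (0:ℝ) < Real.log 2 := Real.log_pos (by norm_num)
  rw [← Finset.sum_filter_add_sum_filter_not (Finset.Icc 3 N) (· ≤ 1030)]
  unfold Ebound
  apply add_le_add
  · calc ∑ n ∈ (Finset.Icc 3 N).filter (· ≤ 1030), ech n
        ≤ ∑ _n ∈ (Finset.Icc 3 N).filter (· ≤ 1030),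
            ((Real.log 1030)^2 / (Real.log 2)^2) := by
          apply Finset.sum_le_sum
          intro n hn
          obtain ⟨hn1, hn2⟩ := Finset.mem_filter.1 hn
          exact ech_le_small (Finset.mem_Icc.1 hn1).1 hn2
      _ = ((Finset.Icc 3 N).filter (· ≤ 1030)).card * ((Real.log 1030)^2 / (Real.log 2)^2) := by
          rw [Finset.sum_const, nsmul_eq_mul]
      _ ≤ 1028 * ((Real.log 1030)^2 / (Real.log 2)^2) := by
          have hcard : ((Finset.Icc 3 N).filter (· ≤ 1030)).card ≤ 1028 := by
            have hsub : (Finset.Icc 3 N).filter (· ≤ 1030) ⊆ Finset.Icc 3 1030 := by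
              intro n hn
              obtain ⟨hn1, hn2⟩ := Finset.mem_filter.1 hn
              exact Finset.mem_Icc.2 ⟨(Finset.mem_Icc.1 hn1).1, hn2⟩
            calc ((Finset.Icc 3 N).filter (· ≤ 1030)).card ≤ (Finset.Icc 3 1030).card :=
                  Finset.card_le_card hsub
              _ = 1028 := by rw [Nat.card_Icc]
          have hB : (0:ℝ) ≤ (Real.log 1030)^2 / (Real.log 2)^2 := by positivity
          exact mul_le_mul_of_nonneg_right (by exact_mod_cast hcard) hB
  · calc ∑ n ∈ (Finset.Icc 3 N).filter (¬ · ≤ 1030), ech n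
        ≤ ∑ n ∈ (Finset.Icc 3 N).filter (¬ · ≤ 1030),
            4096 / (Real.log 2)^2 * (1 / (n:ℝ)^((3:ℝ)/2)) := by
          apply Finset.sum_le_sum
          intro n hn
          obtain ⟨_, hn2⟩ := Finset.mem_filter.1 hn
          exact ech_le_large (by omega)
      _ = 4096 / (Real.log 2)^2 * ∑ n ∈ (Finset.Icc 3 N).filter (¬ · ≤ 1030),
            (1 / (n:ℝ)^((3:ℝ)/2)) := by rw [Finset.mul_sum]
      _ ≤ 4096 / (Real.log 2)^2 * ∑' (n:ℕ), 1 / (n:ℝ)^((3:ℝ)/2) := by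
          apply mul_le_mul_of_nonneg_left _ (by positivity)
          exact Summable.sum_le_tsum _ (fun i _ => by positivity) summable_32
noncomputable def C2ch : ℝ :=
  Real.log (Real.log 4) + Real.log (16 / Real.log 2)
    + (Real.log 1025 + |Real.log (Real.log 2)|)

theorem log2_pos : (0:ℝ) < Real.log 2 := Real.log_pos (by norm_num)

theorem log2_le_one : Real.log 2 ≤ 1 := by
  have := Real.log_le_sub_one_of_pos (show (0:ℝ) < 2 by norm_num)
  linarith

theorem log4_gt_one : (1:ℝ) < Real.log 4 := by
  have h : Real.log 4 = 2 * Real.log 2 := by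
    rw [show (4:ℝ) = 2^2 by norm_num, Real.log_pow]; push_cast; ring
  have := Real.log_two_gt_d9
  rw [h]; linarith

theorem c2a_nonneg : 0 ≤ Real.log (Real.log 4) :=
  Real.log_nonneg log4_gt_one.le

theorem c2b_nonneg : 0 ≤ Real.log (16 / Real.log 2) := by
  apply Real.log_nonneg
  rw [le_div_iff₀ log2_pos]
  linarith [log2_le_one]

theorem c2c_nonneg : 0 ≤ Real.log 1025 + |Real.log (Real.log 2)| := by
  have : (0:ℝ) ≤ Real.log 1025 := Real.log_nonneg (by norm_num)
  positivity

theorem C2ch_nonneg : 0 ≤ C2ch := by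
  have := c2a_nonneg; have := c2b_nonneg; have := c2c_nonneg
  unfold C2ch; linarith

theorem log_gch_bound {x : ℝ} (hx : 2 ≤ x) :
    |Real.log (gch ⌊x⌋₊) - Real.log x| ≤ C2ch := by
  set N := ⌊x⌋₊ with hNdef
  have hN2 : 2 ≤ N := Nat.le_floor (by exact_mod_cast hx)
  have hgpos : 0 < gch N := gch_pos hN2
  have hx0 : (0:ℝ) < x := by linarith
  have hNx : (N:ℝ) ≤ x := Nat.floor_le hx0.le
  have hxlog : (0:ℝ) < Real.log x := Real.log_pos (by linarith)
  have hl4 : (0:ℝ) < Real.log 4 := lt_trans one_pos log4_gt_one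
  -- upper estimate
  have hup : gch N ≤ x * Real.log 4 := by
    have := gch_le N
    nlinarith
  have h1 : Real.log (gch N) - Real.log x ≤ Real.log (Real.log 4) := by
    have := Real.log_le_log hgpos hup
    rw [Real.log_mul hx0.ne' hl4.ne'] at this
    linarith
  -- lower estimate
  have h2 : Real.log x - Real.log (gch N)
      ≤ Real.log (16 / Real.log 2) + (Real.log 1025 + |Real.log (Real.log 2)|) := by
    rcases le_or_gt 1025 x with hc | hc
    · have hN1024 : 1024 ≤ N := Nat.le_floor (by push_cast; linarith)
      have hNge : x - 1 ≤ (N:ℝ) := by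
        have := Nat.lt_floor_add_one x
        push_cast at this
        linarith
      have hglow : x / 16 * Real.log 2 ≤ gch N := by
        have h3 := gch_lower hN1024
        have : x / 2 ≤ (N:ℝ) := by linarith
        nlinarith [log2_pos]
      have hkey : Real.log (x * (Real.log 2 / 16)) ≤ Real.log (gch N) := by
        apply Real.log_le_log (by positivity)
        calc x * (Real.log 2 / 16) = x / 16 * Real.log 2 := by ring
          _ ≤ gch N := hglow
      rw [Real.log_mul hx0.ne' (by positivity)] at hkey
      have hinv : Real.log (Real.log 2 / 16) = - Real.log (16 / Real.log 2) := by
        rw [← Real.log_inv, inv_div]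
      rw [hinv] at hkey
      have := c2c_nonneg
      linarith
    · have hgl : Real.log (Real.log 2) ≤ Real.log (gch N) :=
        Real.log_le_log log2_pos (gch_ge_log2 hN2)
      have hxu : Real.log x ≤ Real.log 1025 := Real.log_le_log hx0 (by linarith)
      have habs : - |Real.log (Real.log 2)| ≤ Real.log (Real.log 2) := neg_abs_le _
      have := c2b_nonneg
      linarith
  have := c2a_nonneg; have := c2b_nonneg; have := c2c_nonneg
  rw [abs_le]
  constructor
  · unfold C2ch; linarith
  · unfold C2ch; linarith

theorem Ebound_nonneg : 0 ≤ Ebound := by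
  have h1 : (0:ℝ) ≤ ∑' (n:ℕ), 1 / (n:ℝ)^((3:ℝ)/2) :=
    tsum_nonneg (fun i => by positivity)
  have := log2_pos
  unfold Ebound
  positivity

theorem sum_Iic2_tch : ∑ n ∈ Finset.Iic 2, tch n = 1 := by
  rw [Iic_eq_range]
  rw [Finset.sum_range_succ, Finset.sum_range_succ, Finset.sum_range_one]
  have h0 : tch 0 = 0 := by simp [tch]
  have h1 : tch 1 = 0 := by simp [tch]
  have h2 : tch 2 = 1 := by
    simp only [tch, if_pos Nat.prime_two, gch_two]
    push_cast
    exact div_self log2_pos.ne'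
  rw [h0, h1, h2]; ring


/-- With `θ x = ∑_{p ≤ x, p prime} ln p` the first Chebyshev function,
`∑_{p ≤ x, p prime} ln p / θ p = ln x + O(1)` for `x ≥ 2`. -/
theorem sum_log_div_chebyshev_eq_log_add_bigO
    (θ : ℝ → ℝ)
    (hθ : ∀ x : ℝ, θ x = ∑ q ∈ (Finset.Iic ⌊x⌋₊).filter Nat.Prime, Real.log q) :
    ∃ C : ℝ, 0 < C ∧ ∀ x : ℝ, 2 ≤ x →
      |(∑ q ∈ (Finset.Iic ⌊x⌋₊).filter Nat.Prime, Real.log q / θ q) - Real.log x| ≤ C := by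
  refine ⟨|1 - Real.log (Real.log 2)| + C2ch + Ebound + 1, ?_, ?_⟩
  · have := C2ch_nonneg; have := Ebound_nonneg
    have : (0:ℝ) ≤ |1 - Real.log (Real.log 2)| := abs_nonneg _
    linarith
  intro x hx
  set N := ⌊x⌋₊ with hNdef
  have hN2 : 2 ≤ N := Nat.le_floor (by exact_mod_cast hx)
  have hθq : ∀ q : ℕ, θ (q:ℝ) = gch q := by
    intro q
    rw [hθ, Nat.floor_natCast, theta_eq]
  have hS : (∑ q ∈ (Finset.Iic N).filter Nat.Prime, Real.log q / θ q)
      = ∑ n ∈ Finset.Iic N, tch n := by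
    rw [Finset.sum_filter]
    apply Finset.sum_congr rfl
    intro n _
    rw [hθq n]
    simp [tch]
  have hsplit : ∑ n ∈ Finset.Iic N, tch n
      = (∑ n ∈ Finset.Iic 2, tch n) + ∑ n ∈ Finset.Icc 3 N, tch n := by
    have hu : Finset.Iic N = Finset.Iic 2 ∪ Finset.Icc 3 N := by
      ext a
      simp only [Finset.mem_Iic, Finset.mem_union, Finset.mem_Icc]
      omega
    have hd : Disjoint (Finset.Iic 2) (Finset.Icc 3 N) := by
      rw [Finset.disjoint_left]
      intro a ha hb
      simp only [Finset.mem_Iic] at ha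
      simp only [Finset.mem_Icc] at hb
      omega
    rw [hu, Finset.sum_union hd]
  have hT_up : ∑ n ∈ Finset.Icc 3 N, tch n
      ≤ Real.log (gch N) - Real.log (gch 2) := by
    rw [← sum_L_eq N hN2]
    exact Finset.sum_le_sum (fun n hn => t_upper (Finset.mem_Icc.1 hn).1)
  have hT_lo : Real.log (gch N) - Real.log (gch 2) - Ebound
      ≤ ∑ n ∈ Finset.Icc 3 N, tch n := by
    have h1 : ∑ n ∈ Finset.Icc 3 N,
        (Real.log (gch n) - Real.log (gch (n-1)) - ech n)
        ≤ ∑ n ∈ Finset.Icc 3 N, tch n :=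
      Finset.sum_le_sum (fun n hn => t_lower (Finset.mem_Icc.1 hn).1)
    rw [Finset.sum_sub_distrib, sum_L_eq N hN2] at h1
    have h2 := err_sum_le N
    linarith
  have hlg2 : Real.log (gch 2) = Real.log (Real.log 2) := by rw [gch_two]
  have habs := log_gch_bound hx
  rw [abs_le] at habs
  have habs1 := abs_le.1 (le_refl |1 - Real.log (Real.log 2)|)
  have hA1 : -(|1 - Real.log (Real.log 2)|) ≤ 1 - Real.log (Real.log 2) := neg_abs_le _
  have hA2 : 1 - Real.log (Real.log 2) ≤ |1 - Real.log (Real.log 2)| := le_abs_self _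
  have hE := Ebound_nonneg
  rw [hS, hsplit, sum_Iic2_tch, abs_le]
  rw [hlg2] at hT_up hT_lo
  constructor <;> [skip; skip] <;> linarith
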